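/- Let φ : ℝ² → ℝ be given by a homogeneous polynomial of degree 4 with φ(u) > 0 for every u ≠ (0,0). Then there exists τ₀ > 0 such that for every τ ∈ (0, τ₀) and every v = (v₁, v₂, v₃) ∈ ℝ³ with v₁² + v₂² + v₃² = 1, every complex root of the polynomial (φ(v₁, v₂) + v₃⁴)·X⁴ − (τ(v₁² + v₂²) + v₃²)·X² + τ³ ∈ ℂ[X] is real. -/

import Mathlib

lemma real_sq_im (r : ℝ) (hr : 0 ≤ r) (z : ℂ) (h : z ^ 2 = (r : ℂ)) : z.im = 0 := by
  have h1 : (z ^ 2).im = 0 := by rw [h]; simp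
  have h2 : (z ^ 2).re = r := by rw [h]; simp
  simp [pow_two, Complex.mul_im, Complex.mul_re] at h1 h2
  have h1' : z.re * z.im = 0 := by linarith
  rcases mul_eq_zero.mp h1' with h0 | h0
  · have him : z.im * z.im = 0 :=
      le_antisymm (by nlinarith) (mul_self_nonneg _)
    exact mul_self_eq_zero.mp him
  · exact h0

lemma aux_quartic (a b c : ℝ) (ha : 0 < a) (hb : 0 ≤ b) (hc : 0 ≤ c)
    (h : 4 * a * c ≤ b ^ 2) (z : ℂ)
    (hz : (a : ℂ) * z ^ 4 - (b : ℂ) * z ^ 2 + (c : ℂ) = 0) : z.im = 0 := by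
  set s := Real.sqrt (b ^ 2 - 4 * a * c) with hs
  have hs0 : 0 ≤ s := Real.sqrt_nonneg _
  have hs2 : s ^ 2 = b ^ 2 - 4 * a * c := Real.sq_sqrt (by linarith)
  have hsb : s ≤ b := by
    have := Real.sqrt_le_sqrt (show b ^ 2 - 4 * a * c ≤ b ^ 2 by nlinarith)
    rwa [Real.sqrt_sq hb] at this
  set w₁ := (b - s) / (2 * a) with hw₁def
  set w₂ := (b + s) / (2 * a) with hw₂def
  have hw₁ : 0 ≤ w₁ := div_nonneg (by linarith) (by linarith)
  have hw₂ : 0 ≤ w₂ := div_nonneg (by linarith) (by linarith)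
  have ha' : (a : ℝ) ≠ 0 := ne_of_gt ha
  have e1r : a * (w₁ + w₂) = b := by rw [hw₁def, hw₂def]; field_simp; ring
  have e2r : a * (w₁ * w₂) = c := by
    rw [hw₁def, hw₂def]
    field_simp
    nlinarith [hs2]
  have e1 : (a : ℂ) * ((w₁ : ℂ) + (w₂ : ℂ)) = (b : ℂ) := by exact_mod_cast congrArg (Complex.ofReal) e1r
  have e2 : (a : ℂ) * ((w₁ : ℂ) * (w₂ : ℂ)) = (c : ℂ) := by exact_mod_cast congrArg (Complex.ofReal) e2r
  have key : (a : ℂ) * (z ^ 2 - w₁) * (z ^ 2 - w₂) = 0 := by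
    linear_combination hz - z ^ 2 * e1 + e2
  have haC : (a : ℂ) ≠ 0 := by exact_mod_cast ha'
  rcases mul_eq_zero.mp key with h' | h'
  · rcases mul_eq_zero.mp h' with h'' | h''
    · exact absurd h'' haC
    · exact real_sq_im w₁ hw₁ z (sub_eq_zero.mp h'')
  · exact real_sq_im w₂ hw₂ z (sub_eq_zero.mp h')

theorem stmt3 (φ : ℝ → ℝ → ℝ)
    (P : MvPolynomial (Fin 2) ℝ) (hP : P.IsHomogeneous 4)
    (hφP : ∀ u₁ u₂ : ℝ, φ u₁ u₂ = MvPolynomial.eval ![u₁, u₂] P)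
    (hpos : ∀ u₁ u₂ : ℝ, (u₁, u₂) ≠ (0, 0) → 0 < φ u₁ u₂) :
    ∃ τ₀ > (0 : ℝ), ∀ τ ∈ Set.Ioo (0 : ℝ) τ₀, ∀ v₁ v₂ v₃ : ℝ,
      v₁ ^ 2 + v₂ ^ 2 + v₃ ^ 2 = 1 →
      ∀ z : ℂ,
        (Polynomial.C ((φ v₁ v₂ + v₃ ^ 4 : ℝ) : ℂ) * Polynomial.X ^ 4
          - Polynomial.C ((τ * (v₁ ^ 2 + v₂ ^ 2) + v₃ ^ 2 : ℝ) : ℂ) * Polynomial.X ^ 2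
          + Polynomial.C ((τ ^ 3 : ℝ) : ℂ)).IsRoot z →
        z.im = 0 := by
  -- φ vanishes at the origin
  have hφ0 : φ 0 0 = 0 := by
    rw [hφP]
    have hvec : ![(0 : ℝ), 0] = (0 : Fin 2 → ℝ) := by
      funext i; fin_cases i <;> rfl
    rw [hvec]
    rw [show MvPolynomial.eval (0 : Fin 2 → ℝ) P = MvPolynomial.constantCoeff P from
      congrFun (congrArg _ MvPolynomial.eval_zero) P]
    exact hP.coeff_eq_zero (by simp [Finsupp.degree])
  -- continuity and a bound on the closed ball
  have hcont : Continuous fun p : ℝ × ℝ => φ p.1 p.2 := by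
    have : (fun p : ℝ × ℝ => φ p.1 p.2)
        = (fun x : Fin 2 → ℝ => MvPolynomial.eval x P) ∘ (fun p : ℝ × ℝ => ![p.1, p.2]) := by
      funext p; simp [hφP]
    rw [this]
    refine (MvPolynomial.continuous_eval P).comp (continuous_pi fun i => ?_)
    fin_cases i
    · simpa using continuous_fst
    · simpa using continuous_snd
  obtain ⟨x₀, hx₀mem, hA'⟩ :=
    (isCompact_closedBall (0 : ℝ × ℝ) 1).exists_isMaxOn
      ⟨0, Metric.mem_closedBall_self zero_le_one⟩
      hcont.continuousOn
  have hA : ∀ p ∈ Metric.closedBall (0 : ℝ × ℝ) 1, φ p.1 p.2 ≤ φ x₀.1 x₀.2 :=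
    fun p hp => hA' hp
  set A := φ x₀.1 x₀.2 with hAdef
  have hA0 : 0 ≤ A := by
    have := hA 0 (Metric.mem_closedBall_self zero_le_one)
    simpa [hφ0] using this
  refine ⟨min 1 (1 / (4 * (A + 1))), lt_min one_pos (by positivity), ?_⟩
  rintro τ ⟨hτ0, hτlt⟩ v₁ v₂ v₃ hv z hz
  have hτ1 : τ < 1 := lt_of_lt_of_le hτlt (min_le_left _ _)
  have hτA : τ < 1 / (4 * (A + 1)) := lt_of_lt_of_le hτlt (min_le_right _ _)
  set a := φ v₁ v₂ + v₃ ^ 4 with hadef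
  set b := τ * (v₁ ^ 2 + v₂ ^ 2) + v₃ ^ 2 with hbdef
  -- a > 0
  have ha : 0 < a := by
    by_cases h12 : (v₁, v₂) = (0, 0)
    · have h1 : v₁ = 0 := congrArg Prod.fst h12
      have h2 : v₂ = 0 := congrArg Prod.snd h12
      have h3 : v₃ ^ 2 = 1 := by rw [h1, h2] at hv; linarith
      have h4 : v₃ ^ 4 = 1 := by nlinarith
      rw [hadef, h1, h2, hφ0, h4]; norm_num
    · have := hpos v₁ v₂ h12
      nlinarith [sq_nonneg (v₃ ^ 2)]
  -- b ≥ τ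
  have hbτ : τ ≤ b := by nlinarith [sq_nonneg v₃, sq_nonneg v₁, sq_nonneg v₂]
  have hb : 0 ≤ b := le_trans (le_of_lt hτ0) hbτ
  -- a ≤ A + 1
  have hball : (v₁, v₂) ∈ Metric.closedBall (0 : ℝ × ℝ) 1 := by
    rw [Metric.mem_closedBall, dist_zero_right, Prod.norm_def]
    have h1 : ‖v₁‖ ≤ 1 := by
      rw [Real.norm_eq_abs, abs_le]; constructor <;> nlinarith [sq_nonneg v₂, sq_nonneg v₃]
    have h2 : ‖v₂‖ ≤ 1 := by
      rw [Real.norm_eq_abs, abs_le]; constructor <;> nlinarith [sq_nonneg v₁, sq_nonneg v₃]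
    exact max_le h1 h2
  have haA : a ≤ A + 1 := by
    have hφle : φ v₁ v₂ ≤ A := hA (v₁, v₂) hball
    have h3 : v₃ ^ 4 ≤ 1 := by nlinarith [sq_nonneg v₁, sq_nonneg v₂, sq_nonneg v₃]
    linarith
  -- discriminant
  have hdisc : 4 * a * τ ^ 3 ≤ b ^ 2 := by
    have hAone : 0 < 4 * (A + 1) := by linarith
    have hτA' : 4 * (A + 1) * τ ≤ 1 := by
      rw [lt_div_iff₀ hAone] at hτA
      linarith
    have e1 : 4 * a * τ ^ 3 ≤ 4 * (A + 1) * τ ^ 3 := by nlinarith [pow_pos hτ0 3]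
    have e2 : 4 * (A + 1) * τ ^ 3 ≤ τ ^ 2 := by nlinarith [sq_nonneg τ]
    have e3 : τ ^ 2 ≤ b ^ 2 := by nlinarith
    linarith
  -- conclude via the auxiliary lemma
  have hz' : (a : ℂ) * z ^ 4 - (b : ℂ) * z ^ 2 + ((τ ^ 3 : ℝ) : ℂ) = 0 := by
    have := hz
    simp only [Polynomial.IsRoot, Polynomial.eval_add, Polynomial.eval_sub,
      Polynomial.eval_mul, Polynomial.eval_pow, Polynomial.eval_C, Polynomial.eval_X] at this
    exact this
  exact aux_quartic a b (τ ^ 3) ha hb (by positivity) hdisc z hz'
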